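/- Let H be a free abelian group with basis B, and let Ω : H → H be a group endomorphism mapping each basis element either to 0 or to a non-negative linear combination of basis elements (so that 'Ω^n(v) = 0' makes sense for generators v of a subgroup generated by basis elements). For a subgroup G of H generated by a finite subset S of B with η_Ω(G) < ∞, one has: η_Ω(G) = max{ n ∈ ℕ : there exists v ∈ G with Ω^n(v) = 0 and Ω^{n-1}(v) ≠ 0 }, provided this set is nonempty; if Ω is injective on G and all its iterates, then η_Ω(G) = 0. -/

import Mathlib

/-- Abstract form of the characterization of the Igusa-Todorov function:
for a free abelian group `H` with basis `B`, an endomorphism `Ω` mapping each basis element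
to `0` or to a non-negative combination of basis elements, and `G` generated by a finite
subset of the basis with `η_Ω(G) = k` finite, `k` is the maximum of the `n` with
`Ω^n(v) = 0 ≠ Ω^{n-1}(v)` for some `v ∈ G`, when such `n` exist; and `k = 0` if all
restrictions of `Ω` are injective. -/
theorem stmt6 (H : Type*) [AddCommGroup H] (ι : Type*) (B : Module.Basis ι ℤ H)
    (Ω : AddMonoid.End H)
    (hΩ : ∀ i, Ω (B i) = 0 ∨ ∃ c : ι →₀ ℕ, Ω (B i) = c.sum fun j n => (n : ℤ) • B j)
    (S : Finset ι) (G : AddSubgroup H) (hG : G = AddSubgroup.closure (⇑B '' (S : Set ι)))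
    (k : ℕ)
    (hk : IsLeast {k : ℕ | ∀ m ≥ k, Set.InjOn Ω (AddSubgroup.map (Ω ^ m) G : Set H)} k) :
    (({n : ℕ | ∃ v ∈ G, (Ω ^ n) v = 0 ∧ (Ω ^ (n - 1)) v ≠ 0}).Nonempty →
      k = sSup {n : ℕ | ∃ v ∈ G, (Ω ^ n) v = 0 ∧ (Ω ^ (n - 1)) v ≠ 0}) ∧
    ((∀ m : ℕ, Set.InjOn Ω (AddSubgroup.map (Ω ^ m) G : Set H)) → k = 0) := by
  set N := {n : ℕ | ∃ v ∈ G, (Ω ^ n) v = 0 ∧ (Ω ^ (n - 1)) v ≠ 0} with hN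
  constructor
  · intro hne
    have hub : ∀ n ∈ N, n ≤ k := by
      rintro n ⟨v, hv, h0, h1⟩
      rcases Nat.eq_zero_or_pos n with hn0 | hn0
      · exfalso; subst hn0; simp at h0 h1; exact h1 h0
      obtain ⟨p, rfl⟩ : ∃ p, n = p + 1 := ⟨n - 1, by omega⟩
      simp only [Nat.add_sub_cancel] at h1
      by_contra h
      push_neg at h
      have hinj := hk.1 p (by omega)
      have hmem : (Ω ^ p) v ∈ (AddSubgroup.map (Ω ^ p) G : Set H) := by
        exact ⟨v, hv, rfl⟩
      have h0' : (0 : H) ∈ (AddSubgroup.map (Ω ^ p) G : Set H) :=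
        (AddSubgroup.map (Ω ^ p) G).zero_mem
      have heq : Ω ((Ω ^ p) v) = Ω 0 := by
        rw [map_zero]
        show (Ω * Ω ^ p) v = 0
        rw [← pow_succ']
        exact h0
      exact h1 (hinj hmem h0' heq)
    have hsle : sSup N ≤ k := csSup_le hne hub
    have hPs : sSup N ∈ {k : ℕ | ∀ m ≥ k, Set.InjOn Ω (AddSubgroup.map (Ω ^ m) G : Set H)} := by
      intro m hm x hx y hy hxy
      by_contra hxy'
      obtain ⟨a, ha, rfl⟩ := hx
      obtain ⟨b, hb, rfl⟩ := hy
      have hvG : a - b ∈ G := G.sub_mem ha hb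
      have hΩm : (Ω ^ m) (a - b) ≠ 0 := by
        intro h
        rw [map_sub, sub_eq_zero] at h
        exact hxy' h
      have hΩm1 : (Ω ^ (m + 1)) (a - b) = 0 := by
        rw [pow_succ']
        show Ω ((Ω ^ m) (a - b)) = 0
        rw [map_sub, map_sub, sub_eq_zero]; exact hxy
      have hmemN : m + 1 ∈ N := ⟨a - b, hvG, hΩm1, by simpa using hΩm⟩
      have := le_csSup ⟨k, hub⟩ hmemN
      omega
    exact le_antisymm (hk.2 hPs) hsle
  · intro h
    exact Nat.le_zero.mp (hk.2 fun m _ => h m)
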